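/- Let G = GL2(Q) × GSp4(Q) act on the set of lines in the 6-dimensional symplectic Q-space V = ⟨e1,f1⟩ ⊕ ⟨e2,e3,f3,f2⟩ (GL2 acting on the first summand, GSp4 on the second, with equal similitudes). Then this action on the set of 1-dimensional subspaces of V has exactly three orbits, represented by the lines ⟨f1⟩, ⟨f2⟩, and ⟨f1+f2⟩. -/
import Mathlib


/-! Orbits of `GL2 ⊠ GSp4` on lines in the 6-dimensional symplectic ℚ-space. -/

abbrev V6 : Type := Fin 6 → ℚ

/-- Symplectic form; indices `0,…,5` are `e1,e2,e3,f3,f2,f1`. -/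
def symp (x y : V6) : ℚ :=
  x 0 * y 5 - x 5 * y 0 + x 1 * y 4 - x 4 * y 1 + x 2 * y 3 - x 3 * y 2

def e1 : V6 := Pi.single 0 1
def e2 : V6 := Pi.single 1 1
def e3 : V6 := Pi.single 2 1
def f3 : V6 := Pi.single 3 1
def f2 : V6 := Pi.single 4 1
def f1 : V6 := Pi.single 5 1

def V1 : Submodule ℚ V6 := Submodule.span ℚ {e1, f1}
def V2 : Submodule ℚ V6 := Submodule.span ℚ {e2, e3, f3, f2}

/-- `(GL2 ⊠ GSp4)(ℚ)`: invertible linear maps preserving `V1` and `V2` and scaling the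
symplectic form by a single nonzero similitude factor. -/
def Hgrp : Set (V6 ≃ₗ[ℚ] V6) :=
  {g | (∃ ν : ℚ, ν ≠ 0 ∧ ∀ x y : V6, symp (g x) (g y) = ν * symp x y) ∧
    Submodule.map (g : V6 →ₗ[ℚ] V6) V1 = V1 ∧ Submodule.map (g : V6 →ₗ[ℚ] V6) V2 = V2}

/-- The three representative lines `⟨f1⟩`, `⟨f2⟩`, `⟨f1 + f2⟩`. -/
def repLine : Fin 3 → Submodule ℚ V6 :=
  ![Submodule.span ℚ {f1}, Submodule.span ℚ {f2}, Submodule.span ℚ {f1 + f2}]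

def W1 : Submodule ℚ V6 where
  carrier := {x | x 1 = 0 ∧ x 2 = 0 ∧ x 3 = 0 ∧ x 4 = 0}
  add_mem' := by
    rintro a b ⟨h1, h2, h3, h4⟩ ⟨g1, g2, g3, g4⟩
    refine ⟨?_, ?_, ?_, ?_⟩ <;> simp_all [Pi.add_apply]
  zero_mem' := by simp
  smul_mem' := by
    rintro c a ⟨h1, h2, h3, h4⟩
    refine ⟨?_, ?_, ?_, ?_⟩ <;> simp_all [Pi.smul_apply]

def W2 : Submodule ℚ V6 where
  carrier := {x | x 0 = 0 ∧ x 5 = 0}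
  add_mem' := by
    rintro a b ⟨h1, h2⟩ ⟨g1, g2⟩
    exact ⟨by simp [h1, g1], by simp [h2, g2]⟩
  zero_mem' := by simp
  smul_mem' := by
    rintro c a ⟨h1, h2⟩
    exact ⟨by simp [h1], by simp [h2]⟩

lemma memV1_iff (x : V6) : x ∈ V1 ↔ x 1 = 0 ∧ x 2 = 0 ∧ x 3 = 0 ∧ x 4 = 0 := by
  constructor
  · intro hx
    have : V1 ≤ W1 := by
      rw [V1, Submodule.span_le]
      rintro y (rfl | rfl) <;>
        refine ⟨?_, ?_, ?_, ?_⟩ <;> simp [e1, f1, Pi.single_apply]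
    exact this hx
  · rintro ⟨h1, h2, h3, h4⟩
    have : x = x 0 • e1 + x 5 • f1 := by
      funext i
      fin_cases i <;>
        simp_all [e1, f1, Pi.single_apply, Pi.add_apply, Pi.smul_apply]
    rw [this]
    exact Submodule.add_mem _
      (Submodule.smul_mem _ _ (Submodule.subset_span (by simp)))
      (Submodule.smul_mem _ _ (Submodule.subset_span (by simp)))

lemma memV2_iff (x : V6) : x ∈ V2 ↔ x 0 = 0 ∧ x 5 = 0 := by
  constructor
  · intro hx
    have : V2 ≤ W2 := by
      rw [V2, Submodule.span_le]
      rintro y (rfl | rfl | rfl | rfl) <;>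
        refine ⟨?_, ?_⟩ <;> simp [e2, e3, f3, f2, Pi.single_apply]
    exact this hx
  · rintro ⟨h1, h2⟩
    have : x = x 1 • e2 + x 2 • e3 + x 3 • f3 + x 4 • f2 := by
      funext i
      fin_cases i <;>
        simp_all [e2, e3, f3, f2, Pi.single_apply, Pi.add_apply, Pi.smul_apply]
    rw [this]
    refine Submodule.add_mem _ (Submodule.add_mem _ (Submodule.add_mem _ ?_ ?_) ?_) ?_ <;>
      exact Submodule.smul_mem _ _ (Submodule.subset_span (by simp))

def transv (u : V6) (c : ℚ) : V6 ≃ₗ[ℚ] V6 where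
  toFun x := x + (c * symp x u) • u
  invFun x := x + (-(c * symp x u)) • u
  map_add' x y := by
    funext i; simp only [symp, Pi.add_apply, Pi.smul_apply, smul_eq_mul]; ring
  map_smul' t x := by
    funext i; simp only [symp, Pi.add_apply, Pi.smul_apply, smul_eq_mul, RingHom.id_apply]; ring
  left_inv x := by
    funext i; simp only [symp, Pi.add_apply, Pi.smul_apply, smul_eq_mul]; ring
  right_inv x := by
    funext i; simp only [symp, Pi.add_apply, Pi.smul_apply, smul_eq_mul]; ring

lemma transv_apply (u : V6) (c : ℚ) (x : V6) :
    transv u c x = x + (c * symp x u) • u := rfl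
lemma transv_symm_apply (u : V6) (c : ℚ) (x : V6) :
    (transv u c).symm x = x + (-(c * symp x u)) • u := rfl
lemma transv_symp (u : V6) (c : ℚ) (x y : V6) :
    symp (transv u c x) (transv u c y) = symp x y := by
  simp only [transv_apply, symp, Pi.add_apply, Pi.smul_apply, smul_eq_mul]; ring


lemma symp_V2_V1 {x u : V6} (hx : x ∈ V2) (hu : u ∈ V1) : symp x u = 0 := by
  rw [memV2_iff] at hx; rw [memV1_iff] at hu
  obtain ⟨a, b⟩ := hx; obtain ⟨c, d, e, f⟩ := hu
  simp [symp, a, b, c, d, e, f]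

lemma symp_V1_V2 {x u : V6} (hx : x ∈ V1) (hu : u ∈ V2) : symp x u = 0 := by
  rw [memV1_iff] at hx; rw [memV2_iff] at hu
  obtain ⟨a, b, c, d⟩ := hx; obtain ⟨e, f⟩ := hu
  simp [symp, a, b, c, d, e, f]

-- map equality helper
lemma map_eq_of (g : V6 ≃ₗ[ℚ] V6) (W : Submodule ℚ V6)
    (h1 : ∀ x ∈ W, g x ∈ W) (h2 : ∀ x ∈ W, g.symm x ∈ W) :
    Submodule.map (g : V6 →ₗ[ℚ] V6) W = W := by
  apply le_antisymm
  · rintro x ⟨y, hy, rfl⟩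
    exact h1 y hy
  · intro x hx
    exact ⟨g.symm x, h2 x hx, g.apply_symm_apply x⟩

lemma transv_mem_Hgrp_V1 {u : V6} (hu : u ∈ V1) (c : ℚ) :
    transv u c ∈ Hgrp ∧ ∀ x ∈ V2, transv u c x = x := by
  have hfix : ∀ x ∈ V2, transv u c x = x := by
    intro x hx
    rw [transv_apply, symp_V2_V1 hx hu]
    simp
  refine ⟨⟨⟨1, one_ne_zero, fun x y => by rw [transv_symp, one_mul]⟩, ?_, ?_⟩, hfix⟩
  · apply map_eq_of
    · intro x hx
      rw [transv_apply]
      exact Submodule.add_mem _ hx (Submodule.smul_mem _ _ hu)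
    · intro x hx
      rw [transv_symm_apply]
      exact Submodule.add_mem _ hx (Submodule.smul_mem _ _ hu)
  · apply map_eq_of
    · intro x hx; rw [hfix x hx]; exact hx
    · intro x hx
      rw [transv_symm_apply, symp_V2_V1 hx hu]
      simpa using hx

lemma transv_mem_Hgrp_V2 {u : V6} (hu : u ∈ V2) (c : ℚ) :
    transv u c ∈ Hgrp ∧ ∀ x ∈ V1, transv u c x = x := by
  have hfix : ∀ x ∈ V1, transv u c x = x := by
    intro x hx
    rw [transv_apply, symp_V1_V2 hx hu]
    simp
  refine ⟨⟨⟨1, one_ne_zero, fun x y => by rw [transv_symp, one_mul]⟩, ?_, ?_⟩, hfix⟩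
  · apply map_eq_of
    · intro x hx; rw [hfix x hx]; exact hx
    · intro x hx
      rw [transv_symm_apply, symp_V1_V2 hx hu]
      simpa using hx
  · apply map_eq_of
    · intro x hx
      rw [transv_apply]
      exact Submodule.add_mem _ hx (Submodule.smul_mem _ _ hu)
    · intro x hx
      rw [transv_symm_apply]
      exact Submodule.add_mem _ hx (Submodule.smul_mem _ _ hu)

lemma Hgrp_trans {g g' : V6 ≃ₗ[ℚ] V6} (hg : g ∈ Hgrp) (hg' : g' ∈ Hgrp) :
    g.trans g' ∈ Hgrp := by
  obtain ⟨⟨ν, hν, hsymp⟩, hm1, hm2⟩ := hg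
  obtain ⟨⟨ν', hν', hsymp'⟩, hm1', hm2'⟩ := hg'
  refine ⟨⟨ν' * ν, mul_ne_zero hν' hν, fun x y => ?_⟩, ?_, ?_⟩
  · rw [LinearEquiv.trans_apply, LinearEquiv.trans_apply, hsymp', hsymp]; ring
  · rw [LinearEquiv.coe_trans, Submodule.map_comp, hm1, hm1']
  · rw [LinearEquiv.coe_trans, Submodule.map_comp, hm2, hm2']

-- reach lemma
lemma transv_maps {w v : V6} (h : symp w v ≠ 0) :
    transv (v - w) (1 / symp w v) w = v := by
  rw [transv_apply]
  have h1 : symp w (v - w) = symp w v := by simp only [symp, Pi.sub_apply]; ring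
  rw [h1, one_div_mul_cancel h]
  funext i
  simp

lemma e1_mem : e1 ∈ V1 := Submodule.subset_span (by simp)
lemma f1_mem : f1 ∈ V1 := Submodule.subset_span (by simp)
lemma e2_mem : e2 ∈ V2 := Submodule.subset_span (by simp)
lemma e3_mem : e3 ∈ V2 := Submodule.subset_span (by simp)
lemma f3_mem : f3 ∈ V2 := Submodule.subset_span (by simp)
lemma f2_mem : f2 ∈ V2 := Submodule.subset_span (by simp)

lemma reach_aux {w v z : V6} {W : Submodule ℚ V6} {W' : Submodule ℚ V6}
    (hmem : ∀ u ∈ W, ∀ c : ℚ, transv u c ∈ Hgrp ∧ ∀ x ∈ W', transv u c x = x)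
    (hw : w ∈ W) (hv : v ∈ W) (hz : z ∈ W)
    (h1 : symp w z ≠ 0) (h2 : symp z v ≠ 0) :
    ∃ g ∈ Hgrp, g w = v ∧ ∀ x ∈ W', g x = x := by
  set g1 := transv (z - w) (1 / symp w z) with hg1
  set g2 := transv (v - z) (1 / symp z v) with hg2
  obtain ⟨hg1H, hg1fix⟩ := hmem _ (Submodule.sub_mem _ hz hw) (1 / symp w z)
  obtain ⟨hg2H, hg2fix⟩ := hmem _ (Submodule.sub_mem _ hv hz) (1 / symp z v)
  refine ⟨g1.trans g2, Hgrp_trans hg1H hg2H, ?_, ?_⟩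
  · rw [LinearEquiv.trans_apply, hg1, transv_maps h1, hg2, transv_maps h2]
  · intro x hx
    rw [LinearEquiv.trans_apply, hg1fix x hx, hg2fix x hx]

lemma reach_V1 {v : V6} (hv : v ∈ V1) (hv0 : v ≠ 0) :
    ∃ g ∈ Hgrp, g f1 = v ∧ ∀ x ∈ V2, g x = x := by
  have hmem : ∀ u ∈ V1, ∀ c : ℚ, transv u c ∈ Hgrp ∧ ∀ x ∈ V2, transv u c x = x :=
    fun u hu c => transv_mem_Hgrp_V1 hu c
  obtain ⟨h1, h2, h3, h4⟩ := (memV1_iff v).mp hv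
  by_cases h5 : v 5 = 0
  · have h0 : v 0 ≠ 0 := by
      intro h0
      apply hv0
      funext i
      fin_cases i <;> simp_all
    refine reach_aux hmem f1_mem hv (Submodule.sub_mem _ e1_mem f1_mem) ?_ ?_
    · simp [symp, e1, f1, Pi.single_apply]
    · simp [symp, Pi.sub_apply, e1, f1, Pi.single_apply, h1, h2, h3, h4, h5, h0, sub_eq_zero]
  · refine reach_aux hmem f1_mem hv e1_mem ?_ ?_
    · simp [symp, e1, f1, Pi.single_apply]
    · simp [symp, e1, Pi.single_apply, h1, h2, h3, h4, h5, sub_eq_zero]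

lemma reach_V2 {v : V6} (hv : v ∈ V2) (hv0 : v ≠ 0) :
    ∃ g ∈ Hgrp, g f2 = v ∧ ∀ x ∈ V1, g x = x := by
  have hmem : ∀ u ∈ V2, ∀ c : ℚ, transv u c ∈ Hgrp ∧ ∀ x ∈ V1, transv u c x = x :=
    fun u hu c => transv_mem_Hgrp_V2 hu c
  obtain ⟨h0, h5⟩ := (memV2_iff v).mp hv
  by_cases h4 : v 4 ≠ 0
  · refine reach_aux hmem f2_mem hv e2_mem ?_ ?_
    · simp [symp, e2, f2, Pi.single_apply]
    · simp [symp, e2, Pi.single_apply, h0, h5, h4, sub_eq_zero]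
  · push_neg at h4
    by_cases h3 : v 3 ≠ 0
    · refine reach_aux hmem f2_mem hv (Submodule.add_mem _ e2_mem e3_mem) ?_ ?_
      · simp [symp, e2, e3, f2, Pi.single_apply]
      · simp [symp, Pi.add_apply, e2, e3, Pi.single_apply, h0, h5, h4, h3, sub_eq_zero]
    · push_neg at h3
      by_cases h2 : v 2 ≠ 0
      · refine reach_aux hmem f2_mem hv (Submodule.sub_mem _ e2_mem f3_mem) ?_ ?_
        · simp [symp, e2, f3, f2, Pi.single_apply]
        · simp [symp, Pi.sub_apply, e2, f3, Pi.single_apply, h0, h5, h4, h3, h2, sub_eq_zero]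
      · push_neg at h2
        have h1 : v 1 ≠ 0 := by
          intro h1
          apply hv0
          funext i
          fin_cases i <;> simp_all
        refine reach_aux hmem f2_mem hv (Submodule.sub_mem _ e2_mem f2_mem) ?_ ?_
        · simp [symp, e2, f2, Pi.single_apply]
        · simp [symp, Pi.sub_apply, e2, f2, Pi.single_apply, h0, h5, h4, h3, h2, h1, sub_eq_zero]

lemma inf_V1_V2 {x : V6} (h1 : x ∈ V1) (h2 : x ∈ V2) : x = 0 := by
  rw [memV1_iff] at h1; rw [memV2_iff] at h2
  obtain ⟨a, b, c, d⟩ := h1; obtain ⟨e, f⟩ := h2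
  funext i; fin_cases i <;> simp_all

lemma f1_ne : f1 ≠ 0 := by
  intro h
  have : f1 5 = 0 := by rw [h]; rfl
  simp [f1, Pi.single_apply] at this

lemma f2_ne : f2 ≠ 0 := by
  intro h
  have : f2 4 = 0 := by rw [h]; rfl
  simp [f2, Pi.single_apply] at this

-- map of a span of a singleton
lemma map_span_singleton (g : V6 ≃ₗ[ℚ] V6) (w : V6) :
    Submodule.map (g : V6 →ₗ[ℚ] V6) (Submodule.span ℚ {w}) = Submodule.span ℚ {g w} := by
  rw [Submodule.map_span, Set.image_singleton]
  rfl

-- orbit type lemmas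
lemma type0 {g : V6 ≃ₗ[ℚ] V6} {L : Submodule ℚ V6} (hg : g ∈ Hgrp)
    (h : Submodule.map (g : V6 →ₗ[ℚ] V6) (repLine 0) = L) : L ≤ V1 := by
  have h0 : repLine 0 = Submodule.span ℚ {f1} := rfl
  rw [← h, h0]
  calc Submodule.map (g : V6 →ₗ[ℚ] V6) (Submodule.span ℚ {f1})
      ≤ Submodule.map (g : V6 →ₗ[ℚ] V6) V1 :=
        Submodule.map_mono (Submodule.span_le.mpr (by simpa using f1_mem))
    _ = V1 := hg.2.1

lemma type1 {g : V6 ≃ₗ[ℚ] V6} {L : Submodule ℚ V6} (hg : g ∈ Hgrp)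
    (h : Submodule.map (g : V6 →ₗ[ℚ] V6) (repLine 1) = L) : L ≤ V2 := by
  have h0 : repLine 1 = Submodule.span ℚ {f2} := rfl
  rw [← h, h0]
  calc Submodule.map (g : V6 →ₗ[ℚ] V6) (Submodule.span ℚ {f2})
      ≤ Submodule.map (g : V6 →ₗ[ℚ] V6) V2 :=
        Submodule.map_mono (Submodule.span_le.mpr (by simpa using f2_mem))
    _ = V2 := hg.2.2

lemma type2 {g : V6 ≃ₗ[ℚ] V6} {L : Submodule ℚ V6} (hg : g ∈ Hgrp)
    (h : Submodule.map (g : V6 →ₗ[ℚ] V6) (repLine 2) = L) : ¬ L ≤ V1 ∧ ¬ L ≤ V2 := by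
  have h0 : repLine 2 = Submodule.span ℚ {f1 + f2} := rfl
  have hmem : g (f1 + f2) ∈ L := by
    rw [← h, h0]
    exact ⟨f1 + f2, Submodule.mem_span_singleton_self _, rfl⟩
  have hgf1 : g f1 ∈ V1 := by
    rw [← hg.2.1]; exact ⟨f1, f1_mem, rfl⟩
  have hgf2 : g f2 ∈ V2 := by
    rw [← hg.2.2]; exact ⟨f2, f2_mem, rfl⟩
  have hsum : g (f1 + f2) = g f1 + g f2 := map_add _ _ _
  constructor
  · intro hle
    have h1 : g f1 + g f2 ∈ V1 := hsum ▸ hle hmem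
    have h2 : g f2 ∈ V1 := by
      have := Submodule.sub_mem _ h1 hgf1
      simpa using this
    have := inf_V1_V2 h2 hgf2
    exact f2_ne (g.map_eq_zero_iff.mp this)
  · intro hle
    have h1 : g f1 + g f2 ∈ V2 := hsum ▸ hle hmem
    have h2 : g f1 ∈ V2 := by
      have := Submodule.sub_mem _ h1 hgf2
      simpa using this
    have := inf_V1_V2 hgf1 h2
    exact f1_ne (g.map_eq_zero_iff.mp this)


/-- The action of `GL2(ℚ) ⊠ GSp4(ℚ)` on the set of lines in `V` has exactly three orbits,
represented by `⟨f1⟩`, `⟨f2⟩` and `⟨f1+f2⟩`. -/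
theorem line_orbit_classification (L : Submodule ℚ V6) (hL : Module.finrank ℚ L = 1) :
    ∃! k : Fin 3, ∃ g ∈ Hgrp, Submodule.map (g : V6 →ₗ[ℚ] V6) (repLine k) = L := by

  -- get a spanning vector
  obtain ⟨⟨v, hvL⟩, hv0, hspan⟩ := finrank_eq_one_iff'.mp hL
  have hv0' : v ≠ 0 := fun h => hv0 (Subtype.ext h)
  have hLspan : L = Submodule.span ℚ {v} := by
    apply le_antisymm
    · intro w hw
      obtain ⟨c, hc⟩ := hspan ⟨w, hw⟩
      have : c • v = w := congrArg Subtype.val hc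
      rw [← this]
      exact Submodule.smul_mem _ _ (Submodule.mem_span_singleton_self _)
    · rw [Submodule.span_le, Set.singleton_subset_iff]; exact hvL
  -- decompose v
  set a : V6 := fun i => if i = 0 ∨ i = 5 then v i else 0 with ha
  set b : V6 := fun i => if i = 0 ∨ i = 5 then 0 else v i with hb
  have haV1 : a ∈ V1 := by
    rw [memV1_iff]
    refine ⟨?_, ?_, ?_, ?_⟩ <;> simp [ha]
  have hbV2 : b ∈ V2 := by
    rw [memV2_iff]
    refine ⟨?_, ?_⟩ <;> simp [hb]
  have hab : v = a + b := by
    funext i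
    by_cases h : i = 0 ∨ i = 5 <;> simp [ha, hb, h]
  -- uniqueness helpers
  have hnotboth : ¬ (L ≤ V1 ∧ L ≤ V2) := by
    rintro ⟨hle1, hle2⟩
    exact hv0' (inf_V1_V2 (hle1 hvL) (hle2 hvL))
  by_cases hbz : b = 0
  · -- v ∈ V1, orbit 0
    have hvV1 : v ∈ V1 := by rw [hab, hbz, add_zero]; exact haV1
    obtain ⟨g, hgH, hgf1, -⟩ := reach_V1 hvV1 hv0'
    refine ⟨0, ⟨g, hgH, ?_⟩, ?_⟩
    · show Submodule.map _ (Submodule.span ℚ {f1}) = L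
      rw [map_span_singleton, hgf1, hLspan]
    · rintro k ⟨g', hg'H, hmap⟩
      have hle1 : L ≤ V1 := hLspan ▸ (Submodule.span_le.mpr (by simpa using hvV1))
      fin_cases k
      · rfl
      · exact absurd ⟨hle1, type1 hg'H hmap⟩ hnotboth
      · exact absurd hle1 (type2 hg'H hmap).1
  · by_cases haz : a = 0
    · -- v ∈ V2, orbit 1
      have hvV2 : v ∈ V2 := by rw [hab, haz, zero_add]; exact hbV2
      obtain ⟨g, hgH, hgf2, -⟩ := reach_V2 hvV2 hv0'
      refine ⟨1, ⟨g, hgH, ?_⟩, ?_⟩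
      · show Submodule.map _ (Submodule.span ℚ {f2}) = L
        rw [map_span_singleton, hgf2, hLspan]
      · rintro k ⟨g', hg'H, hmap⟩
        have hle2 : L ≤ V2 := hLspan ▸ (Submodule.span_le.mpr (by simpa using hvV2))
        fin_cases k
        · exact absurd ⟨type0 hg'H hmap, hle2⟩ hnotboth
        · rfl
        · exact absurd hle2 (type2 hg'H hmap).2
    · -- orbit 2
      obtain ⟨g1, hg1H, hg1f1, hg1fix⟩ := reach_V1 haV1 haz
      obtain ⟨g2, hg2H, hg2f2, hg2fix⟩ := reach_V2 hbV2 hbz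
      have key : (g2.trans g1) (f1 + f2) = v := by
        rw [LinearEquiv.trans_apply, map_add, hg2fix f1 f1_mem, hg2f2,
          map_add, hg1f1, hg1fix b hbV2, ← hab]
      refine ⟨2, ⟨g2.trans g1, Hgrp_trans hg2H hg1H, ?_⟩, ?_⟩
      · show Submodule.map _ (Submodule.span ℚ {f1 + f2}) = L
        rw [map_span_singleton, key, hLspan]
      · rintro k ⟨g', hg'H, hmap⟩
        have hnle1 : ¬ L ≤ V1 := by
          intro hle
          apply hbz
          have hvV1 := hle hvL
          have : b ∈ V1 := by
            rw [hab] at hvV1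
            simpa using Submodule.sub_mem _ hvV1 haV1
          exact inf_V1_V2 this hbV2
        have hnle2 : ¬ L ≤ V2 := by
          intro hle
          apply haz
          have hvV2 := hle hvL
          have : a ∈ V2 := by
            rw [hab] at hvV2
            simpa using Submodule.sub_mem _ hvV2 hbV2
          exact inf_V1_V2 haV1 this
        fin_cases k
        · exact absurd (type0 hg'H hmap) hnle1
        · exact absurd (type1 hg'H hmap) hnle2
        · rfl
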